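/- Let μ > 0 and ℏ > 0 be real constants and let F, G : ℝ → ℝ be continuous. Then the time kernel factor T_S satisfies the integral form of the time kernel equation: for all real u, v, T_S(u,v) = u/4 + (μ/(2ℏ²)) ∫_0^u F(u') (∫_0^v G(v')·T_S(u',v') dv') du'. -/

import Mathlib

/-- The confluent hypergeometric limit function ₀F₁(;1;z) = Σ_{n=0}^∞ zⁿ/(n!)². -/
noncomputable def hyp0F1one (z : ℝ) : ℝ := ∑' n : ℕ, z ^ n / ((n.factorial : ℝ)) ^ 2

/-- The time kernel factor T_S(u,v). -/
noncomputable def TS (μ hbar : ℝ) (F G : ℝ → ℝ) (u v : ℝ) : ℝ :=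
  u / 4 + μ / (2 * hbar ^ 2) *
    ∫ v' in (0:ℝ)..v, G v' *
      ∫ u' in (0:ℝ)..u, F u' * (u' / 4) *
        hyp0F1one (μ / (2 * hbar ^ 2) * (∫ s in v'..v, G s) * (∫ s in u'..u, F s))

namespace Stmt9Aux

open MeasureTheory intervalIntegral Finset Set

noncomputable def prim (f : ℝ → ℝ) (u : ℝ) : ℝ := ∫ s in (0:ℝ)..u, f s

noncomputable def Mom (f : ℝ → ℝ) (j : ℕ) (u : ℝ) : ℝ :=
  ∫ s in (0:ℝ)..u, f s * (s / 4) * prim f s ^ j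

noncomputable def Jf (f : ℝ → ℝ) (n : ℕ) (u : ℝ) : ℝ :=
  ∫ s in (0:ℝ)..u, f s * (s / 4) * (prim f u - prim f s) ^ n

lemma prim_zero (f : ℝ → ℝ) : prim f 0 = 0 := intervalIntegral.integral_same

lemma prim_hasDerivAt {f : ℝ → ℝ} (hf : Continuous f) (u : ℝ) :
    HasDerivAt (prim f) (f u) u :=
  intervalIntegral.integral_hasDerivAt_right (hf.intervalIntegrable _ _)
    hf.aestronglyMeasurable.stronglyMeasurableAtFilter hf.continuousAt

lemma prim_continuous {f : ℝ → ℝ} (hf : Continuous f) : Continuous (prim f) :=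
  intervalIntegral.continuous_primitive (fun a b => hf.intervalIntegrable a b) 0

lemma integral_eq_prim {f : ℝ → ℝ} (hf : Continuous f) (a b : ℝ) :
    (∫ s in a..b, f s) = prim f b - prim f a :=
  (intervalIntegral.integral_interval_sub_left (hf.intervalIntegrable 0 b)
    (hf.intervalIntegrable 0 a)).symm

lemma integral_mul_pow_prim {f : ℝ → ℝ} (hf : Continuous f) (n : ℕ) (v : ℝ) :
    (∫ w in (0:ℝ)..v, f w * prim f w ^ n) = prim f v ^ (n + 1) / (n + 1) := by
  have hd : ∀ w ∈ Set.uIcc (0:ℝ) v, HasDerivAt (fun x => prim f x ^ (n + 1) / (n + 1))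
      (f w * prim f w ^ n) w := by
    intro w _
    have h := ((prim_hasDerivAt hf w).pow (n + 1)).div_const ((n : ℝ) + 1)
    refine h.congr_deriv (Eq.symm ?_)
    have : ((n:ℝ) + 1) ≠ 0 := by positivity
    push_cast
    field_simp
  rw [intervalIntegral.integral_eq_sub_of_hasDerivAt hd
    ((hf.mul ((prim_continuous hf).pow n)).intervalIntegrable _ _)]
  simp [prim_zero]

lemma integral_mul_pow_prim_sub {f : ℝ → ℝ} (hf : Continuous f) (n : ℕ) (v : ℝ) :
    (∫ w in (0:ℝ)..v, f w * (prim f v - prim f w) ^ n) = prim f v ^ (n + 1) / (n + 1) := by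
  have hd : ∀ w ∈ Set.uIcc (0:ℝ) v, HasDerivAt (fun x => -((prim f v - prim f x) ^ (n + 1) / (n + 1)))
      (f w * (prim f v - prim f w) ^ n) w := by
    intro w _
    have h1 : HasDerivAt (fun x => prim f v - prim f x) (-f w) w := by
      have h0 := (hasDerivAt_const w (prim f v)).sub (prim_hasDerivAt hf w)
      rwa [zero_sub] at h0
    have h := ((h1.pow (n + 1)).div_const ((n : ℝ) + 1)).neg
    refine h.congr_deriv (Eq.symm ?_)
    have : ((n:ℝ) + 1) ≠ 0 := by positivity
    push_cast
    field_simp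
  rw [intervalIntegral.integral_eq_sub_of_hasDerivAt hd
    ((hf.mul ((continuous_const.sub (prim_continuous hf)).pow n)).intervalIntegrable _ _)]
  simp [prim_zero]

lemma Mom_continuous {f : ℝ → ℝ} (hf : Continuous f) (j : ℕ) : Continuous (Mom f j) :=
  intervalIntegral.continuous_primitive
    (fun a b => ((hf.mul (continuous_id.div_const 4)).mul
      ((prim_continuous hf).pow j)).intervalIntegrable a b) 0

lemma Mom_hasDerivAt {f : ℝ → ℝ} (hf : Continuous f) (j : ℕ) (u : ℝ) :
    HasDerivAt (Mom f j) (f u * (u / 4) * prim f u ^ j) u := by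
  have hc : Continuous fun s => f s * (s / 4) * prim f s ^ j :=
    (hf.mul (continuous_id.div_const 4)).mul ((prim_continuous hf).pow j)
  exact intervalIntegral.integral_hasDerivAt_right (hc.intervalIntegrable _ _)
    hc.aestronglyMeasurable.stronglyMeasurableAtFilter hc.continuousAt

lemma Jf_eq_sum {f : ℝ → ℝ} (hf : Continuous f) (n : ℕ) (u : ℝ) :
    Jf f n u = ∑ k ∈ range (n + 1),
      (-1 : ℝ) ^ (k + n) * prim f u ^ k * (n.choose k : ℝ) * Mom f (n - k) u := by
  unfold Jf Mom
  have h : ∀ s : ℝ, f s * (s / 4) * (prim f u - prim f s) ^ n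
      = ∑ k ∈ range (n + 1),
        (-1 : ℝ) ^ (k + n) * prim f u ^ k * (n.choose k : ℝ) *
          (f s * (s / 4) * prim f s ^ (n - k)) := by
    intro s
    rw [sub_pow]
    rw [Finset.mul_sum]
    refine Finset.sum_congr rfl fun k _ => by ring
  simp only [h]
  rw [intervalIntegral.integral_finset_sum]
  · refine Finset.sum_congr rfl fun k _ => ?_
    rw [intervalIntegral.integral_const_mul]
  · intro k _
    exact (continuous_const.mul ((hf.mul (continuous_id.div_const 4)).mul
      ((prim_continuous hf).pow (n - k)))).intervalIntegrable _ _

lemma Jf_continuous {f : ℝ → ℝ} (hf : Continuous f) (n : ℕ) : Continuous (Jf f n) := by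
  have : Jf f n = fun u => ∑ k ∈ range (n + 1),
      (-1 : ℝ) ^ (k + n) * prim f u ^ k * (n.choose k : ℝ) * Mom f (n - k) u := by
    funext u; exact Jf_eq_sum hf n u
  rw [this]
  exact continuous_finset_sum _ fun k _ =>
    ((continuous_const.mul ((prim_continuous hf).pow k)).mul continuous_const).mul
      (Mom_continuous hf (n - k))

lemma Jf_zero_at_zero (f : ℝ → ℝ) (n : ℕ) : Jf f n 0 = 0 := intervalIntegral.integral_same

lemma Jf_succ_hasDerivAt {f : ℝ → ℝ} (hf : Continuous f) (m : ℕ) (u : ℝ) :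
    HasDerivAt (Jf f (m + 1)) (((m : ℝ) + 1) * f u * Jf f m u) u := by
  have hfun : Jf f (m + 1) = fun x => ∑ k ∈ range (m + 2),
      ((-1 : ℝ) ^ (k + (m + 1)) * ((m + 1).choose k : ℝ)) *
        (prim f x ^ k * Mom f (m + 1 - k) x) := by
    funext x
    rw [Jf_eq_sum hf]
    exact Finset.sum_congr rfl fun k _ => by ring
  rw [hfun]
  have hterm : ∀ k ∈ range (m + 2), HasDerivAt
      (fun x => ((-1 : ℝ) ^ (k + (m + 1)) * ((m + 1).choose k : ℝ)) *
        (prim f x ^ k * Mom f (m + 1 - k) x))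
      (((-1 : ℝ) ^ (k + (m + 1)) * ((m + 1).choose k : ℝ)) *
        (((k : ℝ) * prim f u ^ (k - 1) * f u) * Mom f (m + 1 - k) u
          + prim f u ^ k * (f u * (u / 4) * prim f u ^ (m + 1 - k)))) u := by
    intro k _
    exact (((prim_hasDerivAt hf u).pow k).mul (Mom_hasDerivAt hf (m + 1 - k) u)).const_mul _
  have hsum := HasDerivAt.fun_sum hterm
  refine hsum.congr_deriv (Eq.symm ?_)
  rw [Jf_eq_sum hf m u]
  have split : ∑ k ∈ range (m + 2),
      ((-1 : ℝ) ^ (k + (m + 1)) * ((m + 1).choose k : ℝ)) *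
        (((k : ℝ) * prim f u ^ (k - 1) * f u) * Mom f (m + 1 - k) u
          + prim f u ^ k * (f u * (u / 4) * prim f u ^ (m + 1 - k)))
      = (∑ k ∈ range (m + 2),
          ((-1 : ℝ) ^ (k + (m + 1)) * ((m + 1).choose k : ℝ)) *
            (((k : ℝ) * prim f u ^ (k - 1) * f u) * Mom f (m + 1 - k) u))
        + ∑ k ∈ range (m + 2),
          ((-1 : ℝ) ^ (k + (m + 1)) * ((m + 1).choose k : ℝ)) *
            (prim f u ^ k * (f u * (u / 4) * prim f u ^ (m + 1 - k))) := by
    rw [← Finset.sum_add_distrib]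
    exact Finset.sum_congr rfl fun k _ => by ring
  rw [split]
  have h2 : ∑ k ∈ range (m + 2),
      ((-1 : ℝ) ^ (k + (m + 1)) * ((m + 1).choose k : ℝ)) *
        (prim f u ^ k * (f u * (u / 4) * prim f u ^ (m + 1 - k))) = 0 := by
    have hc : ∀ k ∈ range (m + 2),
        ((-1 : ℝ) ^ (k + (m + 1)) * ((m + 1).choose k : ℝ)) *
          (prim f u ^ k * (f u * (u / 4) * prim f u ^ (m + 1 - k)))
        = ((-1 : ℝ) ^ (m + 1) * (f u * (u / 4) * prim f u ^ (m + 1))) *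
            ((-1 : ℝ) ^ k * ((m + 1).choose k : ℝ)) := by
      intro k hk
      have hk' : k ≤ m + 1 := Nat.lt_succ_iff.mp (Finset.mem_range.mp hk)
      have hpow : prim f u ^ k * prim f u ^ (m + 1 - k) = prim f u ^ (m + 1) := by
        rw [← pow_add]; congr 1; omega
      have hsign : (-1 : ℝ) ^ (k + (m + 1)) = (-1 : ℝ) ^ k * (-1 : ℝ) ^ (m + 1) :=
        pow_add _ _ _
      rw [hsign, ← hpow]; ring
    rw [Finset.sum_congr rfl hc, ← Finset.mul_sum]
    have halt : ∑ k ∈ range (m + 2), ((-1 : ℝ) ^ k * ((m + 1).choose k : ℝ)) = 0 := by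
      have h := Int.alternating_sum_range_choose_of_ne (Nat.succ_ne_zero m)
      exact_mod_cast h
    rw [halt, mul_zero]
  rw [h2, add_zero]
  have h1 : ∑ k ∈ range (m + 2),
      ((-1 : ℝ) ^ (k + (m + 1)) * ((m + 1).choose k : ℝ)) *
        (((k : ℝ) * prim f u ^ (k - 1) * f u) * Mom f (m + 1 - k) u)
      = ((m : ℝ) + 1) * f u * ∑ j ∈ range (m + 1),
          (-1 : ℝ) ^ (j + m) * prim f u ^ j * (m.choose j : ℝ) * Mom f (m - j) u := by
    rw [Finset.sum_range_succ']
    have h0 : ((-1 : ℝ) ^ (0 + (m + 1)) * ((m + 1).choose 0 : ℝ)) *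
        (((0 : ℕ) : ℝ) * prim f u ^ (0 - 1) * f u * Mom f (m + 1 - 0) u) = 0 := by
      simp
    rw [h0, add_zero, Finset.mul_sum]
    refine Finset.sum_congr rfl fun j hj => ?_
    have hsub : m + 1 - (j + 1) = m - j := by omega
    have hsign : (-1 : ℝ) ^ (j + 1 + (m + 1)) = (-1 : ℝ) ^ (j + m) := by
      have he : j + 1 + (m + 1) = (j + m) + 2 := by omega
      rw [he, pow_add]; norm_num
    have hcomb : ((j : ℝ) + 1) * ((m + 1).choose (j + 1) : ℝ)
        = ((m : ℝ) + 1) * (m.choose j : ℝ) := by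
      have h := Nat.add_one_mul_choose_eq m j
      have h' : ((m + 1) * m.choose j : ℕ) = ((m + 1).choose (j + 1) * (j + 1) : ℕ) := h
      have h'' : ((m : ℝ) + 1) * (m.choose j : ℝ)
          = ((m + 1).choose (j + 1) : ℝ) * ((j : ℝ) + 1) := by exact_mod_cast h'
      linear_combination (-1 : ℝ) * h''
    rw [hsub, hsign]
    push_cast
    linear_combination ((-1 : ℝ) ^ (j + m) * prim f u ^ j * f u * Mom f (m - j) u) * hcomb
  exact h1.symm

lemma integral_f_mul_Jf {f : ℝ → ℝ} (hf : Continuous f) (m : ℕ) (u : ℝ) :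
    (∫ s in (0:ℝ)..u, f s * Jf f m s) = Jf f (m + 1) u / ((m : ℝ) + 1) := by
  have hd : ∀ s ∈ Set.uIcc (0:ℝ) u,
      HasDerivAt (fun x => Jf f (m + 1) x / ((m : ℝ) + 1)) (f s * Jf f m s) s := by
    intro s _
    have h := (Jf_succ_hasDerivAt hf m s).div_const ((m : ℝ) + 1)
    refine h.congr_deriv (Eq.symm ?_)
    have hm : ((m : ℝ) + 1) ≠ 0 := by positivity
    field_simp
  rw [intervalIntegral.integral_eq_sub_of_hasDerivAt hd
    ((hf.mul (Jf_continuous hf m)).intervalIntegrable _ _)]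
  rw [Jf_zero_at_zero]
  ring

lemma abs_le_abs_of_uIcc {u t : ℝ} (ht : t ∈ Set.uIcc 0 u) : |t| ≤ |u| := by
  rcases Set.mem_uIcc.mp ht with ⟨h1, h2⟩ | ⟨h1, h2⟩
  · rw [abs_of_nonneg h1]; exact le_trans h2 (le_abs_self u)
  · rw [abs_of_nonpos h2]; exact le_trans (neg_le_neg h1) (neg_le_abs u)

lemma bound_on {f : ℝ → ℝ} (hf : Continuous f) (u : ℝ) :
    ∃ C : ℝ, 0 ≤ C ∧ ∀ x ∈ Set.uIcc (0:ℝ) u, |f x| ≤ C := by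
  obtain ⟨C, hC⟩ := (isCompact_uIcc (a := (0:ℝ)) (b := u)).exists_bound_of_continuousOn
    hf.continuousOn
  exact ⟨max C 0, le_max_right _ _, fun x hx => le_trans (hC x hx) (le_max_left _ _)⟩

lemma Jf_bound {f : ℝ → ℝ} (hf : Continuous f) (u : ℝ) :
    ∃ D R : ℝ, 0 ≤ D ∧ 0 ≤ R ∧
      ∀ n : ℕ, ∀ s ∈ Set.uIcc (0:ℝ) u, |Jf f n s| ≤ D * R ^ n := by
  obtain ⟨CF, hCF0, hC⟩ := bound_on hf u
  obtain ⟨CP, hCP0, hCp⟩ := bound_on (prim_continuous hf) u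
  refine ⟨CF * (|u| / 4) * |u|, 2 * CP, by positivity, by positivity, fun n s hs => ?_⟩
  have hsub : Set.uIcc (0:ℝ) s ⊆ Set.uIcc 0 u :=
    Set.uIcc_subset_uIcc Set.left_mem_uIcc hs
  have hbd : ∀ t ∈ Set.uIoc (0:ℝ) s,
      ‖f t * (t / 4) * (prim f s - prim f t) ^ n‖ ≤ CF * (|u| / 4) * (2 * CP) ^ n := by
    intro t ht
    have ht' : t ∈ Set.uIcc (0:ℝ) u := hsub (Set.uIoc_subset_uIcc ht)
    have h1 : |f t| ≤ CF := hC t ht'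
    have h2 : |t| / 4 ≤ |u| / 4 := by
      have := abs_le_abs_of_uIcc ht'
      linarith
    have h3 : |prim f s - prim f t| ≤ 2 * CP := by
      have hps : |prim f s| ≤ CP := hCp s hs
      have hpt : |prim f t| ≤ CP := hCp t ht'
      calc |prim f s - prim f t| ≤ |prim f s| + |prim f t| := abs_sub _ _
        _ ≤ 2 * CP := by linarith
    rw [Real.norm_eq_abs, abs_mul, abs_mul, abs_pow, abs_div]
    have h4 : |(4:ℝ)| = 4 := by norm_num
    rw [h4]
    refine mul_le_mul (mul_le_mul h1 h2 (by positivity) hCF0)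
      (pow_le_pow_left₀ (abs_nonneg _) h3 n) (by positivity) (by positivity)
  have hnorm := intervalIntegral.norm_integral_le_of_norm_le_const hbd
  have habs : |s| ≤ |u| := abs_le_abs_of_uIcc hs
  calc |Jf f n s| = ‖∫ t in (0:ℝ)..s, f t * (t / 4) * (prim f s - prim f t) ^ n‖ := by
        rw [Real.norm_eq_abs]; rfl
    _ ≤ CF * (|u| / 4) * (2 * CP) ^ n * |s - 0| := hnorm
    _ = CF * (|u| / 4) * (2 * CP) ^ n * |s| := by rw [sub_zero]
    _ ≤ CF * (|u| / 4) * (2 * CP) ^ n * |u| := by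
        refine mul_le_mul_of_nonneg_left habs ?_
        positivity
    _ = CF * (|u| / 4) * |u| * (2 * CP) ^ n := by ring

lemma summable_pow_div_factorial_sq (x : ℝ) :
    Summable (fun n : ℕ => |x| ^ n / ((n.factorial : ℝ)) ^ 2) := by
  refine Summable.of_nonneg_of_le (fun n => by positivity) (fun n => ?_)
    (Real.summable_pow_div_factorial |x|)
  have h1 : (1 : ℝ) ≤ (n.factorial : ℝ) := by
    have := n.factorial_pos
    exact_mod_cast this
  have h2 : (n.factorial : ℝ) ≤ ((n.factorial : ℝ)) ^ 2 := by nlinarith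
  exact div_le_div_of_nonneg_left (by positivity) (by positivity) h2

lemma summable_of_bound {g : ℕ → ℝ} (K y : ℝ) (hy : 0 ≤ y)
    (h : ∀ n, |g n| ≤ K * (y ^ n / ((n.factorial : ℝ)) ^ 2)) : Summable g := by
  refine Summable.of_norm_bounded ?_ h
  simpa [abs_of_nonneg hy] using (summable_pow_div_factorial_sq y).mul_left K

lemma hyp_hasSum (z : ℝ) :
    HasSum (fun n : ℕ => z ^ n / ((n.factorial : ℝ)) ^ 2) (hyp0F1one z) := by
  have hs : Summable (fun n : ℕ => z ^ n / ((n.factorial : ℝ)) ^ 2) := by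
    refine Summable.of_norm_bounded (summable_pow_div_factorial_sq z) (fun n => ?_)
    rw [Real.norm_eq_abs, abs_div, abs_pow]
    have : |((n.factorial : ℝ)) ^ 2| = ((n.factorial : ℝ)) ^ 2 := abs_of_nonneg (by positivity)
    rw [this]
  exact hs.hasSum

lemma hasSum_intervalIntegral {f : ℕ → ℝ → ℝ} {a b : ℝ}
    (hc : ∀ n, Continuous (f n)) (bound : ℕ → ℝ) (hb : Summable bound)
    (hbd : ∀ n, ∀ x ∈ Set.uIcc a b, |f n x| ≤ bound n) :
    HasSum (fun n => ∫ x in a..b, f n x) (∫ x in a..b, ∑' n, f n x) := by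
  have hkey : ∀ (p q : ℝ), Set.uIcc p q ⊆ Set.uIcc a b → p ≤ q →
      HasSum (fun n => ∫ x in Set.Ioc p q, f n x) (∫ x in Set.Ioc p q, ∑' n, f n x) := by
    intro p q hsub hpq
    refine MeasureTheory.hasSum_integral_of_summable_integral_norm ?_ ?_
    · intro n
      exact ((hc n).intervalIntegrable p q).def'.mono_set
        (by rw [Set.uIoc_of_le hpq])
    · refine Summable.of_nonneg_of_le (fun n => integral_nonneg fun x => norm_nonneg _)
        (fun n => ?_) (hb.mul_right (volume (Set.Ioc p q)).toReal)
      have hmono : ∫ x in Set.Ioc p q, ‖f n x‖ ≤ ∫ _ in Set.Ioc p q, bound n := by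
        refine setIntegral_mono_on ((hc n).norm.integrableOn_Ioc) (integrableOn_const ?_)
          measurableSet_Ioc (fun x hx => ?_)
        · exact measure_Ioc_lt_top.ne
        · exact hbd n x (hsub (by rw [Set.uIcc_of_le hpq]; exact Set.Ioc_subset_Icc_self hx))
      calc ∫ x in Set.Ioc p q, ‖f n x‖ ≤ ∫ _ in Set.Ioc p q, bound n := hmono
        _ = bound n * (volume (Set.Ioc p q)).toReal := by
            rw [setIntegral_const]; rw [smul_eq_mul, mul_comm]; rfl
  rcases le_total a b with h | h
  · have := hkey a b (by simp) h
    simpa [intervalIntegral.integral_of_le h] using this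
  · have := hkey b a (by rw [Set.uIcc_comm]) h
    have h1 : ∀ g : ℝ → ℝ, (∫ x in a..b, g x) = -∫ x in Set.Ioc b a, g x := by
      intro g
      rw [intervalIntegral.integral_symm, intervalIntegral.integral_of_le h]
    simp only [h1]
    exact this.neg

lemma hasSum_intervalIntegral_shift {f : ℕ → ℝ → ℝ} {a b : ℝ}
    (hc : ∀ n, Continuous (f n)) (b0 : ℝ) (bound : ℕ → ℝ) (hb : Summable bound)
    (hbd0 : ∀ x ∈ Set.uIcc a b, |f 0 x| ≤ b0)
    (hbd : ∀ n, ∀ x ∈ Set.uIcc a b, |f (n+1) x| ≤ bound n) :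
    HasSum (fun n => ∫ x in a..b, f n x) (∫ x in a..b, ∑' n, f n x) := by
  refine hasSum_intervalIntegral hc (fun n => Nat.casesOn n b0 bound) ?_ ?_
  · exact (summable_nat_add_iff 1).mp hb
  · intro n x hx
    cases n with
    | zero => exact hbd0 x hx
    | succ m => exact hbd m x hx

lemma abs_mul_le' {a b c d : ℝ} (h1 : |a| ≤ c) (h2 : |b| ≤ d) : |a * b| ≤ c * d := by
  rw [abs_mul]
  exact mul_le_mul h1 h2 (abs_nonneg _) (le_trans (abs_nonneg a) h1)

lemma abs_pow_le {x y : ℝ} (n : ℕ) (h : |x| ≤ y) : |x ^ n| ≤ y ^ n := by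
  rw [abs_pow]; exact pow_le_pow_left₀ (abs_nonneg _) h n

lemma abs_div_le {a b q : ℝ} (hq : 0 < q) (h : |a| ≤ b) : |a / q| ≤ b / q := by
  rw [abs_div, abs_of_pos hq]
  gcongr


/-- Prepend a term to a sequence of functions. -/
noncomputable def fam (a : ℝ → ℝ) (b : ℕ → ℝ → ℝ) : ℕ → ℝ → ℝ
  | 0 => a
  | (n + 1) => b n

lemma tsum_fam {a : ℝ → ℝ} {b : ℕ → ℝ → ℝ} {w : ℝ} (hb : Summable (fun n => b n w)) :
    ∑' n : ℕ, fam a b n w = a w + ∑' n : ℕ, b n w := by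
  have hs : Summable (fun n => fam a b n w) :=
    (summable_nat_add_iff 1).mp (by simpa [fam] using hb)
  rw [Summable.tsum_eq_zero_add hs]
  simp [fam]

lemma fact_sq_le (n : ℕ) :
    ((n.factorial : ℝ)) ^ 2 ≤ ((n + 1).factorial : ℝ) * (n.factorial : ℝ) := by
  have hf : (0:ℝ) < (n.factorial : ℝ) := by exact_mod_cast n.factorial_pos
  have h5 : (n.factorial : ℝ) ≤ ((n + 1).factorial : ℝ) := by
    exact_mod_cast Nat.factorial_le (Nat.le_succ n)
  nlinarith

lemma coef_bound {x z j y₁ y₂ D R : ℝ} (n : ℕ) (h1 : |x| ≤ y₁) (h2 : |z| ≤ y₂)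
    (hR : 0 ≤ R) (hD : 0 ≤ D) (hj : |j| ≤ D * R ^ n) :
    |x ^ (n + 1) * z ^ (n + 1) / (((n + 1).factorial : ℝ) * (n.factorial : ℝ)) * j|
      ≤ ((y₁ * y₂) * D) * (((y₁ * y₂) * R) ^ n / ((n.factorial : ℝ)) ^ 2) := by
  have hK : (0:ℝ) < ((n + 1).factorial : ℝ) * (n.factorial : ℝ) := by positivity
  have step1 : |x ^ (n + 1) * z ^ (n + 1) / (((n + 1).factorial : ℝ) * (n.factorial : ℝ)) * j|
      ≤ ((y₁ ^ (n + 1) * y₂ ^ (n + 1)) / (((n + 1).factorial : ℝ) * (n.factorial : ℝ)))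
        * (D * R ^ n) :=
    abs_mul_le' (abs_div_le hK (abs_mul_le' (abs_pow_le _ h1) (abs_pow_le _ h2))) hj
  refine le_trans step1 ?_
  have hy1 : 0 ≤ y₁ := le_trans (abs_nonneg x) h1
  have hy2 : 0 ≤ y₂ := le_trans (abs_nonneg z) h2
  have step2 : (y₁ ^ (n + 1) * y₂ ^ (n + 1)) / (((n + 1).factorial : ℝ) * (n.factorial : ℝ))
      ≤ (y₁ ^ (n + 1) * y₂ ^ (n + 1)) / ((n.factorial : ℝ)) ^ 2 :=
    div_le_div_of_nonneg_left (by positivity) (by positivity) (fact_sq_le n)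
  refine le_trans (mul_le_mul_of_nonneg_right step2
    (mul_nonneg hD (pow_nonneg hR n))) (le_of_eq ?_)
  simp only [mul_pow, pow_succ]
  ring

lemma coef_bound1 {x j D R y : ℝ} (n : ℕ) (h1 : |x| ≤ y)
    (hR : 0 ≤ R) (hD : 0 ≤ D) (hj : |j| ≤ D * R ^ n) :
    |x ^ (n + 1) / (((n + 1).factorial : ℝ) * (n.factorial : ℝ)) * j|
      ≤ (y * D) * ((y * R) ^ n / ((n.factorial : ℝ)) ^ 2) := by
  have h := coef_bound (z := (1:ℝ)) (y₂ := (1:ℝ)) n h1 (by norm_num) hR hD hj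
  simp only [one_pow, mul_one] at h
  exact h

lemma key_expansion {F G : ℝ → ℝ} (hF : Continuous F) (hG : Continuous G) (c u v : ℝ) :
    (u / 4 + c *
      ∫ w in (0:ℝ)..v, G w *
        ∫ s in (0:ℝ)..u, F s * (s / 4) *
          hyp0F1one (c * (∫ x in w..v, G x) * (∫ x in s..u, F x)))
    = u / 4 + ∑' n : ℕ, c ^ (n + 1) * prim G v ^ (n + 1) /
        (((n + 1).factorial : ℝ) * (n.factorial : ℝ)) * Jf F n u := by
  obtain ⟨CF, hCF0, hCF⟩ := bound_on hF u
  obtain ⟨CP, hCP0, hCP⟩ := bound_on (prim_continuous hF) u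
  obtain ⟨CQ, hCQ0, hCQ⟩ := bound_on (prim_continuous hG) v
  obtain ⟨CG, hCG0, hCG⟩ := bound_on hG v
  obtain ⟨D, R, hD0, hR0, hDR⟩ := Jf_bound hF u
  have hq : ∀ n : ℕ, (0:ℝ) < ((n.factorial : ℝ)) ^ 2 := fun n => by positivity
  -- Step 1: expand the inner integral as a series
  have hInner : ∀ w ∈ Set.uIcc (0:ℝ) v,
      (∫ s in (0:ℝ)..u, F s * (s / 4) *
          hyp0F1one (c * (∫ x in w..v, G x) * (∫ x in s..u, F x)))
      = ∑' n : ℕ, (c * (prim G v - prim G w)) ^ n / ((n.factorial : ℝ)) ^ 2 * Jf F n u := by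
    intro w hw
    have hB : |prim G v - prim G w| ≤ 2 * CQ := by
      have h1 := hCQ v Set.right_mem_uIcc
      have h2 := hCQ w hw
      calc |prim G v - prim G w| ≤ |prim G v| + |prim G w| := abs_sub _ _
        _ ≤ 2 * CQ := by linarith
    have hrw : ∀ s : ℝ,
        F s * (s / 4) * hyp0F1one (c * (∫ x in w..v, G x) * (∫ x in s..u, F x))
        = ∑' n : ℕ, F s * (s / 4) *
            ((c * (prim G v - prim G w)) ^ n * (prim F u - prim F s) ^ n
              / ((n.factorial : ℝ)) ^ 2) := by
      intro s
      rw [integral_eq_prim hG, integral_eq_prim hF]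
      rw [show hyp0F1one (c * (prim G v - prim G w) * (prim F u - prim F s))
          = ∑' n : ℕ, (c * (prim G v - prim G w) * (prim F u - prim F s)) ^ n
              / ((n.factorial : ℝ)) ^ 2 from rfl]
      rw [← tsum_mul_left]
      exact tsum_congr fun n => by simp only [mul_pow]; try ring
    have hcont : ∀ n : ℕ, Continuous (fun s => F s * (s / 4) *
        ((c * (prim G v - prim G w)) ^ n * (prim F u - prim F s) ^ n
          / ((n.factorial : ℝ)) ^ 2)) := fun n =>
      (hF.mul (continuous_id.div_const 4)).mul
        ((continuous_const.mul ((continuous_const.sub (prim_continuous hF)).pow n)).div_const _)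
    have hbsum : Summable (fun n : ℕ => (CF * (|u| / 4)) *
        (((|c| * (2 * CQ)) * (2 * CP)) ^ n / ((n.factorial : ℝ)) ^ 2)) := by
      have hy : 0 ≤ (|c| * (2 * CQ)) * (2 * CP) :=
        mul_nonneg (mul_nonneg (abs_nonneg c) (by linarith)) (by linarith)
      simpa [abs_of_nonneg hy] using
        (summable_pow_div_factorial_sq ((|c| * (2 * CQ)) * (2 * CP))).mul_left (CF * (|u| / 4))
    have hbd : ∀ n : ℕ, ∀ x ∈ Set.uIcc (0:ℝ) u,
        |F x * (x / 4) * ((c * (prim G v - prim G w)) ^ n * (prim F u - prim F x) ^ n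
          / ((n.factorial : ℝ)) ^ 2)|
        ≤ (CF * (|u| / 4)) * (((|c| * (2 * CQ)) * (2 * CP)) ^ n / ((n.factorial : ℝ)) ^ 2) := by
      intro n x hx
      have hA : |prim F u - prim F x| ≤ 2 * CP := by
        have h1 := hCP u Set.right_mem_uIcc
        have h2 := hCP x hx
        calc |prim F u - prim F x| ≤ |prim F u| + |prim F x| := abs_sub _ _
          _ ≤ 2 * CP := by linarith
      have h1 : |F x| ≤ CF := hCF x hx
      have h2 : |x / 4| ≤ |u| / 4 := by
        rw [abs_div, show |(4:ℝ)| = 4 by norm_num]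
        have := abs_le_abs_of_uIcc hx
        linarith
      have h3 : |c * (prim G v - prim G w)| ≤ |c| * (2 * CQ) :=
        abs_mul_le' (le_refl |c|) hB
      refine le_trans (abs_mul_le' (abs_mul_le' h1 h2) (abs_div_le (hq n)
        (abs_mul_le' (abs_pow_le n h3) (abs_pow_le n hA)))) (le_of_eq ?_)
      simp only [mul_pow]
      try ring
    have hHS := hasSum_intervalIntegral hcont _ hbsum hbd
    rw [intervalIntegral.integral_congr (fun s _ => hrw s), ← hHS.tsum_eq]
    refine tsum_congr fun n => ?_
    have heq : Set.EqOn
        (fun s => F s * (s / 4) * ((c * (prim G v - prim G w)) ^ n *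
          (prim F u - prim F s) ^ n / ((n.factorial : ℝ)) ^ 2))
        (fun s => ((c * (prim G v - prim G w)) ^ n / ((n.factorial : ℝ)) ^ 2) *
          (F s * (s / 4) * (prim F u - prim F s) ^ n)) (Set.uIcc (0:ℝ) u) :=
      fun s _ => by ring
    rw [intervalIntegral.integral_congr heq, intervalIntegral.integral_const_mul]
    rfl
  -- Step 2: integrate in w term by term
  have hOuter : (∫ w in (0:ℝ)..v, G w *
        ∫ s in (0:ℝ)..u, F s * (s / 4) *
          hyp0F1one (c * (∫ x in w..v, G x) * (∫ x in s..u, F x)))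
      = ∑' n : ℕ, (c ^ n / ((n.factorial : ℝ)) ^ 2 * Jf F n u) *
          (prim G v ^ (n + 1) / ((n : ℝ) + 1)) := by
    have hpt : Set.EqOn
        (fun w => G w * ∫ s in (0:ℝ)..u, F s * (s / 4) *
          hyp0F1one (c * (∫ x in w..v, G x) * (∫ x in s..u, F x)))
        (fun w => ∑' n : ℕ, G w * ((c * (prim G v - prim G w)) ^ n
          / ((n.factorial : ℝ)) ^ 2 * Jf F n u)) (Set.uIcc (0:ℝ) v) := by
      intro w hw
      simp only
      rw [hInner w hw]
      exact (tsum_mul_left).symm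
    rw [intervalIntegral.integral_congr hpt]
    have hcont2 : ∀ n : ℕ, Continuous (fun w => G w * ((c * (prim G v - prim G w)) ^ n
        / ((n.factorial : ℝ)) ^ 2 * Jf F n u)) := fun n =>
      hG.mul ((((continuous_const.mul (continuous_const.sub (prim_continuous hG))).pow n).div_const
        _).mul continuous_const)
    have hbsum2 : Summable (fun n : ℕ => (CG * D) *
        ((((|c| * (2 * CQ)) * R)) ^ n / ((n.factorial : ℝ)) ^ 2)) := by
      have hy : 0 ≤ (|c| * (2 * CQ)) * R :=
        mul_nonneg (mul_nonneg (abs_nonneg c) (by linarith)) hR0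
      simpa [abs_of_nonneg hy] using
        (summable_pow_div_factorial_sq ((|c| * (2 * CQ)) * R)).mul_left (CG * D)
    have hbd2 : ∀ n : ℕ, ∀ w ∈ Set.uIcc (0:ℝ) v,
        |G w * ((c * (prim G v - prim G w)) ^ n / ((n.factorial : ℝ)) ^ 2 * Jf F n u)|
        ≤ (CG * D) * ((((|c| * (2 * CQ)) * R)) ^ n / ((n.factorial : ℝ)) ^ 2) := by
      intro n w hw
      have hB : |prim G v - prim G w| ≤ 2 * CQ := by
        have h1 := hCQ v Set.right_mem_uIcc
        have h2 := hCQ w hw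
        calc |prim G v - prim G w| ≤ |prim G v| + |prim G w| := abs_sub _ _
          _ ≤ 2 * CQ := by linarith
      have h3 : |c * (prim G v - prim G w)| ≤ |c| * (2 * CQ) :=
        abs_mul_le' (le_refl |c|) hB
      have hJ : |Jf F n u| ≤ D * R ^ n := hDR n u Set.right_mem_uIcc
      refine le_trans (abs_mul_le' (hCG w hw)
        (abs_mul_le' (abs_div_le (hq n) (abs_pow_le n h3)) hJ)) (le_of_eq ?_)
      simp only [mul_pow]
      try ring
    have hHS2 := hasSum_intervalIntegral hcont2 _ hbsum2 hbd2
    rw [← hHS2.tsum_eq]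
    refine tsum_congr fun n => ?_
    have heq : Set.EqOn
        (fun w => G w * ((c * (prim G v - prim G w)) ^ n / ((n.factorial : ℝ)) ^ 2 * Jf F n u))
        (fun w => ((c ^ n / ((n.factorial : ℝ)) ^ 2) * Jf F n u) *
          (G w * (prim G v - prim G w) ^ n)) (Set.uIcc (0:ℝ) v) :=
      fun w _ => by simp only; rw [mul_pow]; ring
    rw [intervalIntegral.integral_congr heq, intervalIntegral.integral_const_mul,
      integral_mul_pow_prim_sub hG n v]
  rw [hOuter, ← tsum_mul_left]
  congr 1
  refine tsum_congr fun n => ?_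
  have h1 : (((n + 1).factorial : ℝ)) = ((n : ℝ) + 1) * ((n.factorial : ℝ)) := by
    rw [Nat.factorial_succ]; push_cast; ring
  have h2 : ((n.factorial : ℝ)) ≠ 0 := ne_of_gt (by exact_mod_cast n.factorial_pos)
  have h3 : ((n : ℝ) + 1) ≠ 0 := by positivity
  rw [h1]
  field_simp
  ring

end Stmt9Aux

set_option maxHeartbeats 1600000 in
open Stmt9Aux in
theorem stmt9 (μ hbar : ℝ) (hμ : 0 < μ) (hhbar : 0 < hbar)
    (F G : ℝ → ℝ) (hF : Continuous F) (hG : Continuous G) :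
    ∀ u v : ℝ, TS μ hbar F G u v =
      u / 4 + μ / (2 * hbar ^ 2) *
        ∫ u' in (0:ℝ)..u, F u' * ∫ v' in (0:ℝ)..v, G v' * TS μ hbar F G u' v' := by
  have hTS : ∀ u' v' : ℝ, TS μ hbar F G u' v' = u' / 4 + ∑' n : ℕ,
      (μ / (2 * hbar ^ 2)) ^ (n + 1) * prim G v' ^ (n + 1) /
        (((n + 1).factorial : ℝ) * (n.factorial : ℝ)) * Jf F n u' := by
    intro u' v'
    unfold TS
    exact key_expansion hF hG (μ / (2 * hbar ^ 2)) u' v'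
  intro u v
  obtain ⟨CF, hCF0, hCF⟩ := bound_on hF u
  obtain ⟨CQ, hCQ0, hCQ⟩ := bound_on (prim_continuous hG) v
  obtain ⟨CG, hCG0, hCG⟩ := bound_on hG v
  obtain ⟨D, R, hD0, hR0, hDR⟩ := Jf_bound hF u
  have habs4 : |(4:ℝ)| = 4 := by norm_num
  have hInner2 : ∀ s ∈ Set.uIcc (0:ℝ) u,
      (∫ w in (0:ℝ)..v, G w * TS μ hbar F G s w)
      = prim G v * (s / 4) + ∑' n : ℕ,
          ((μ / (2 * hbar ^ 2)) ^ (n + 1) * prim G v ^ (n + 2) /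
            (((n + 1).factorial : ℝ) * (n.factorial : ℝ)) / ((n : ℝ) + 2)) * Jf F n s := by
    intro s hs
    have habs_s : |s| ≤ |u| := abs_le_abs_of_uIcc hs
    set a : ℝ → ℝ := fun w => G w * (s / 4) with ha
    set b : ℕ → ℝ → ℝ := fun n w => G w *
      ((μ / (2 * hbar ^ 2)) ^ (n + 1) * prim G w ^ (n + 1) /
        (((n + 1).factorial : ℝ) * (n.factorial : ℝ)) * Jf F n s) with hb
    have hbd : ∀ n : ℕ, ∀ w ∈ Set.uIcc (0:ℝ) v, |b n w| ≤
        (CG * ((|μ / (2 * hbar ^ 2)| * CQ) * D)) *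
          (((|μ / (2 * hbar ^ 2)| * CQ) * R) ^ n / ((n.factorial : ℝ)) ^ 2) := by
      intro n w hw
      refine le_trans (abs_mul_le' (hCG w hw)
        (coef_bound n (le_refl _) (hCQ w hw) hR0 hD0 (hDR n s hs))) (le_of_eq (by ring))
    have hbsum : Summable (fun n : ℕ => (CG * ((|μ / (2 * hbar ^ 2)| * CQ) * D)) *
        (((|μ / (2 * hbar ^ 2)| * CQ) * R) ^ n / ((n.factorial : ℝ)) ^ 2)) := by
      have hy : 0 ≤ (|μ / (2 * hbar ^ 2)| * CQ) * R :=
        mul_nonneg (mul_nonneg (abs_nonneg _) hCQ0) hR0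
      have h0 := (summable_pow_div_factorial_sq ((|μ / (2 * hbar ^ 2)| * CQ) * R)).mul_left
          (CG * ((|μ / (2 * hbar ^ 2)| * CQ) * D))
      rw [abs_of_nonneg hy] at h0
      exact h0
    have hbS : ∀ w ∈ Set.uIcc (0:ℝ) v, Summable (fun n => b n w) := fun w hw =>
      Summable.of_norm_bounded hbsum (fun n => hbd n w hw)
    have hbd0 : ∀ w ∈ Set.uIcc (0:ℝ) v, |a w| ≤ CG * (|u| / 4) := by
      intro w hw
      refine abs_mul_le' (hCG w hw) ?_
      rw [abs_div, habs4]
      linarith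
    have hcont : ∀ n : ℕ, Continuous (fam a b n) := by
      intro n
      cases n with
      | zero => exact hG.mul continuous_const
      | succ m =>
          exact hG.mul (((continuous_const.mul ((prim_continuous hG).pow (m+1))).div_const
            _).mul continuous_const)
    have hpt : Set.EqOn (fun w => G w * TS μ hbar F G s w)
        (fun w => ∑' n : ℕ, fam a b n w) (Set.uIcc (0:ℝ) v) := by
      intro w hw
      simp only
      rw [hTS s w, tsum_fam (hbS w hw), mul_add]
      congr 1
      exact tsum_mul_left.symm
    have hHS := hasSum_intervalIntegral_shift hcont (CG * (|u| / 4)) _ hbsum hbd0 hbd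
    rw [intervalIntegral.integral_congr hpt, ← hHS.tsum_eq,
      Summable.tsum_eq_zero_add hHS.summable]
    congr 1
    · show (∫ w in (0:ℝ)..v, G w * (s / 4)) = prim G v * (s / 4)
      rw [intervalIntegral.integral_mul_const]
      rfl
    · refine tsum_congr fun n => ?_
      show (∫ w in (0:ℝ)..v, G w *
          ((μ / (2 * hbar ^ 2)) ^ (n + 1) * prim G w ^ (n + 1) /
            (((n + 1).factorial : ℝ) * (n.factorial : ℝ)) * Jf F n s)) = _
      have heq : Set.EqOn (fun w => G w *
          ((μ / (2 * hbar ^ 2)) ^ (n + 1) * prim G w ^ (n + 1) /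
            (((n + 1).factorial : ℝ) * (n.factorial : ℝ)) * Jf F n s))
          (fun w => ((μ / (2 * hbar ^ 2)) ^ (n + 1) /
            (((n + 1).factorial : ℝ) * (n.factorial : ℝ)) * Jf F n s) *
              (G w * prim G w ^ (n + 1))) (Set.uIcc (0:ℝ) v) := by
        intro w _
        simp only
        ring
      rw [intervalIntegral.integral_congr heq, intervalIntegral.integral_const_mul,
        integral_mul_pow_prim hG (n + 1) v]
      push_cast
      ring
  have hOuter2 : (∫ x in (0:ℝ)..u, F x * ∫ w in (0:ℝ)..v, G w * TS μ hbar F G x w)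
      = prim G v * Jf F 0 u + ∑' n : ℕ,
          ((μ / (2 * hbar ^ 2)) ^ (n + 1) * prim G v ^ (n + 2) /
            (((n + 1).factorial : ℝ) * (n.factorial : ℝ)) / ((n : ℝ) + 2)) *
              (Jf F (n + 1) u / ((n : ℝ) + 1)) := by
    set a2 : ℝ → ℝ := fun x => F x * (prim G v * (x / 4)) with ha2
    set b2 : ℕ → ℝ → ℝ := fun n x => F x *
      (((μ / (2 * hbar ^ 2)) ^ (n + 1) * prim G v ^ (n + 2) /
          (((n + 1).factorial : ℝ) * (n.factorial : ℝ)) / ((n : ℝ) + 2)) * Jf F n x) with hb2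
    have hQv : ∀ n : ℕ, |prim G v ^ (n + 2) / ((n : ℝ) + 2)| ≤ CQ ^ 2 * CQ ^ n := by
      intro n
      have hn2 : (0:ℝ) < (n : ℝ) + 2 := by positivity
      calc |prim G v ^ (n + 2) / ((n : ℝ) + 2)|
          ≤ CQ ^ (n + 2) / ((n : ℝ) + 2) :=
            abs_div_le hn2 (abs_pow_le _ (hCQ v Set.right_mem_uIcc))
        _ ≤ CQ ^ (n + 2) := by
            refine div_le_self (pow_nonneg hCQ0 _) ?_
            have : (0:ℝ) ≤ (n : ℝ) := Nat.cast_nonneg n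
            linarith
        _ = CQ ^ 2 * CQ ^ n := by rw [pow_add]; ring
    have hbd : ∀ n : ℕ, ∀ x ∈ Set.uIcc (0:ℝ) u, |b2 n x| ≤
        (CF * ((|μ / (2 * hbar ^ 2)| * D) * CQ ^ 2)) *
          (((|μ / (2 * hbar ^ 2)| * R) * CQ) ^ n / ((n.factorial : ℝ)) ^ 2) := by
      intro n x hx
      have hstep : |((μ / (2 * hbar ^ 2)) ^ (n + 1) * prim G v ^ (n + 2) /
          (((n + 1).factorial : ℝ) * (n.factorial : ℝ)) / ((n : ℝ) + 2)) * Jf F n x|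
          ≤ ((|μ / (2 * hbar ^ 2)| * D) * ((|μ / (2 * hbar ^ 2)| * R) ^ n /
              ((n.factorial : ℝ)) ^ 2)) * (CQ ^ 2 * CQ ^ n) := by
        have hre : ((μ / (2 * hbar ^ 2)) ^ (n + 1) * prim G v ^ (n + 2) /
            (((n + 1).factorial : ℝ) * (n.factorial : ℝ)) / ((n : ℝ) + 2)) * Jf F n x
            = ((μ / (2 * hbar ^ 2)) ^ (n + 1) /
                (((n + 1).factorial : ℝ) * (n.factorial : ℝ)) * Jf F n x) *
              (prim G v ^ (n + 2) / ((n : ℝ) + 2)) := by ring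
        rw [hre]
        exact abs_mul_le' (coef_bound1 n (le_refl _) hR0 hD0 (hDR n x hx)) (hQv n)
      refine le_trans (abs_mul_le' (hCF x hx) hstep) (le_of_eq ?_)
      simp only [mul_pow]
      ring
    have hbsum : Summable (fun n : ℕ => (CF * ((|μ / (2 * hbar ^ 2)| * D) * CQ ^ 2)) *
        (((|μ / (2 * hbar ^ 2)| * R) * CQ) ^ n / ((n.factorial : ℝ)) ^ 2)) := by
      have hy : 0 ≤ (|μ / (2 * hbar ^ 2)| * R) * CQ :=
        mul_nonneg (mul_nonneg (abs_nonneg _) hR0) hCQ0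
      have h0 := (summable_pow_div_factorial_sq ((|μ / (2 * hbar ^ 2)| * R) * CQ)).mul_left
          (CF * ((|μ / (2 * hbar ^ 2)| * D) * CQ ^ 2))
      rw [abs_of_nonneg hy] at h0
      exact h0
    have hbS : ∀ x ∈ Set.uIcc (0:ℝ) u, Summable (fun n => b2 n x) := fun x hx =>
      Summable.of_norm_bounded hbsum (fun n => hbd n x hx)
    have hbd0 : ∀ x ∈ Set.uIcc (0:ℝ) u, |a2 x| ≤ CF * (CQ * (|u| / 4)) := by
      intro x hx
      refine abs_mul_le' (hCF x hx) (abs_mul_le' (hCQ v Set.right_mem_uIcc) ?_)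
      rw [abs_div, habs4]
      have := abs_le_abs_of_uIcc hx
      linarith
    have hcont : ∀ n : ℕ, Continuous (fam a2 b2 n) := by
      intro n
      cases n with
      | zero => exact hF.mul (continuous_const.mul (continuous_id.div_const 4))
      | succ m =>
          exact hF.mul (continuous_const.mul (Jf_continuous hF m))
    have hpt : Set.EqOn (fun x => F x * ∫ w in (0:ℝ)..v, G w * TS μ hbar F G x w)
        (fun x => ∑' n : ℕ, fam a2 b2 n x) (Set.uIcc (0:ℝ) u) := by
      intro x hx
      simp only
      rw [hInner2 x hx, tsum_fam (hbS x hx), mul_add]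
      congr 1
      exact tsum_mul_left.symm
    have hHS := hasSum_intervalIntegral_shift hcont (CF * (CQ * (|u| / 4))) _ hbsum hbd0 hbd
    rw [intervalIntegral.integral_congr hpt, ← hHS.tsum_eq,
      Summable.tsum_eq_zero_add hHS.summable]
    congr 1
    · show (∫ x in (0:ℝ)..u, F x * (prim G v * (x / 4))) = prim G v * Jf F 0 u
      have heq : Set.EqOn (fun x => F x * (prim G v * (x / 4)))
          (fun x => prim G v * (F x * (x / 4) * (prim F u - prim F x) ^ 0))
          (Set.uIcc (0:ℝ) u) := by
        intro x _
        simp only [pow_zero]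
        ring
      rw [intervalIntegral.integral_congr heq, intervalIntegral.integral_const_mul]
      rfl
    · refine tsum_congr fun n => ?_
      show (∫ x in (0:ℝ)..u, F x *
          (((μ / (2 * hbar ^ 2)) ^ (n + 1) * prim G v ^ (n + 2) /
            (((n + 1).factorial : ℝ) * (n.factorial : ℝ)) / ((n : ℝ) + 2)) * Jf F n x)) = _
      have heq : Set.EqOn (fun x => F x *
          (((μ / (2 * hbar ^ 2)) ^ (n + 1) * prim G v ^ (n + 2) /
            (((n + 1).factorial : ℝ) * (n.factorial : ℝ)) / ((n : ℝ) + 2)) * Jf F n x))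
          (fun x => ((μ / (2 * hbar ^ 2)) ^ (n + 1) * prim G v ^ (n + 2) /
            (((n + 1).factorial : ℝ) * (n.factorial : ℝ)) / ((n : ℝ) + 2)) *
              (F x * Jf F n x)) (Set.uIcc (0:ℝ) u) := by
        intro x _
        simp only
        ring
      rw [intervalIntegral.integral_congr heq, intervalIntegral.integral_const_mul,
        integral_f_mul_Jf hF n u]
  -- final assembly
  have hSummTerm : Summable (fun n : ℕ => (μ / (2 * hbar ^ 2)) ^ (n + 1) *
      prim G v ^ (n + 1) / (((n + 1).factorial : ℝ) * (n.factorial : ℝ)) * Jf F n u) := by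
    refine summable_of_bound ((|μ / (2 * hbar ^ 2)| * CQ) * D) ((|μ / (2 * hbar ^ 2)| * CQ) * R)
      (mul_nonneg (mul_nonneg (abs_nonneg _) hCQ0) hR0) (fun n => ?_)
    exact coef_bound n (le_refl _) (hCQ v Set.right_mem_uIcc) hR0 hD0 (hDR n u Set.right_mem_uIcc)
  rw [hOuter2, hTS u v, mul_add, Summable.tsum_eq_zero_add hSummTerm]
  congr 1
  rw [← tsum_mul_left]
  congr 1
  · norm_num [Nat.factorial]
    ring
  · refine tsum_congr fun n => ?_
    have e1 : (((n + 1 + 1).factorial : ℕ) : ℝ) = ((n : ℝ) + 2) * (((n + 1).factorial : ℕ) : ℝ) := by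
      rw [Nat.factorial_succ]
      push_cast
      ring
    have e2 : (((n + 1).factorial : ℕ) : ℝ) = ((n : ℝ) + 1) * ((n.factorial : ℕ) : ℝ) := by
      rw [Nat.factorial_succ]
      push_cast
      ring
    have h2 : ((n.factorial : ℕ) : ℝ) ≠ 0 := ne_of_gt (by exact_mod_cast n.factorial_pos)
    have h3 : ((n : ℝ) + 1) ≠ 0 := by positivity
    have h4 : ((n : ℝ) + 2) ≠ 0 := by positivity
    rw [e1, e2]
    have h5 : hbar ≠ 0 := hhbar.ne'
    field_simp
    have hinv : hbar ^ 2 * hbar⁻¹ ^ 4 = hbar⁻¹ ^ 2 := by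
      rw [show hbar ^ 2 * hbar⁻¹ ^ 4 = (hbar * hbar⁻¹) ^ 2 * hbar⁻¹ ^ 2 by ring,
        mul_inv_cancel₀ h5, one_pow, one_mul]
    linear_combination (μ ^ 2 * μ ^ n * hbar⁻¹ ^ (n * 2) * prim G v ^ 2 * prim G v ^ n *
      Jf F (n + 1) u * (1 / 2) ^ n * (1 / 2)) * hinv
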